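/- Let k be a field, let (H, Δ, ε) be a coalgebra over k, let Γ be an index set, and for each i ∈ Γ let V_i be a k-vector space together with linear maps Δ_i and ε_i making the vector space H ⊕ V_i a coalgebra in such a way that the canonical inclusion H → H ⊕ V_i is a morphism of coalgebras (i.e. Δ_i and ε_i restrict to Δ and ε on H). Set W = H ⊕ (⊕_{i∈Γ} V_i). Then there exist k-linear maps Δ̄ : W → W ⊗ W and ε̄ : W → k making (W, Δ̄, ε̄) a coalgebra such that for every i ∈ Γ the canonical inclusion H ⊕ V_i → W is a morphism of coalgebras; in particular H is a subcoalgebra of W. -/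
import Mathlib

open scoped TensorProduct DirectSum

/-- A `k`-linear map `f : A → B` between (co)algebra structures `cA`, `cB` is a morphism of
coalgebras if `Δ_B ∘ f = (f ⊗ f) ∘ Δ_A` and `ε_B ∘ f = ε_A`. -/
def IsCoalgMor {k A B : Type*} [CommSemiring k] [AddCommMonoid A] [Module k A]
    [AddCommMonoid B] [Module k B]
    (cA : CoalgebraStruct k A) (cB : CoalgebraStruct k B) (f : A →ₗ[k] B) : Prop :=
  cB.comul ∘ₗ f = TensorProduct.map f f ∘ₗ cA.comul ∧ cB.counit ∘ₗ f = cA.counit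

section aux
variable {k A W : Type*} [CommSemiring k] [AddCommMonoid A] [Module k A]
  [AddCommMonoid W] [Module k W]

lemma aux_coassoc (cA : Coalgebra k A) (ΔW : W →ₗ[k] W ⊗[k] W) (f : A →ₗ[k] W)
    (h : ΔW ∘ₗ f = TensorProduct.map f f ∘ₗ cA.comul) :
    ((TensorProduct.assoc k W W W : (W ⊗[k] W) ⊗[k] W →ₗ[k] W ⊗[k] (W ⊗[k] W))
        ∘ₗ ΔW.rTensor W ∘ₗ ΔW) ∘ₗ f
      = (ΔW.lTensor W ∘ₗ ΔW) ∘ₗ f := by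
  have e1 : ΔW.rTensor W ∘ₗ TensorProduct.map f f
      = TensorProduct.map (TensorProduct.map f f) f ∘ₗ cA.comul.rTensor A := by
    rw [LinearMap.rTensor_comp_map, LinearMap.map_comp_rTensor, h]
  have e2 : ΔW.lTensor W ∘ₗ TensorProduct.map f f
      = TensorProduct.map f (TensorProduct.map f f) ∘ₗ cA.comul.lTensor A := by
    rw [LinearMap.lTensor_comp_map, LinearMap.map_comp_lTensor, h]
  simp only [LinearMap.comp_assoc, h]
  rw [← LinearMap.comp_assoc cA.comul (TensorProduct.map f f) (ΔW.rTensor W), e1,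
      ← LinearMap.comp_assoc cA.comul (TensorProduct.map f f) (ΔW.lTensor W), e2,
      LinearMap.comp_assoc,
      ← LinearMap.comp_assoc _ (TensorProduct.map (TensorProduct.map f f) f)
        (TensorProduct.assoc k W W W : (W ⊗[k] W) ⊗[k] W →ₗ[k] W ⊗[k] (W ⊗[k] W)),
      ← TensorProduct.map_map_comp_assoc_eq,
      LinearMap.comp_assoc, Coalgebra.coassoc, LinearMap.comp_assoc]

lemma aux_rcounit (cA : Coalgebra k A) (ΔW : W →ₗ[k] W ⊗[k] W) (εW : W →ₗ[k] k)
    (f : A →ₗ[k] W)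
    (hΔ : ΔW ∘ₗ f = TensorProduct.map f f ∘ₗ cA.comul) (hε : εW ∘ₗ f = cA.counit) :
    (εW.rTensor W ∘ₗ ΔW) ∘ₗ f = TensorProduct.mk k k W 1 ∘ₗ f := by
  have e : εW.rTensor W ∘ₗ TensorProduct.map f f
      = f.lTensor k ∘ₗ cA.counit.rTensor A := by
    rw [LinearMap.rTensor_comp_map, hε, ← LinearMap.lTensor_comp_rTensor]
  rw [LinearMap.comp_assoc, hΔ, ← LinearMap.comp_assoc, e, LinearMap.comp_assoc,
    Coalgebra.rTensor_counit_comp_comul]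
  ext a
  simp

lemma aux_lcounit (cA : Coalgebra k A) (ΔW : W →ₗ[k] W ⊗[k] W) (εW : W →ₗ[k] k)
    (f : A →ₗ[k] W)
    (hΔ : ΔW ∘ₗ f = TensorProduct.map f f ∘ₗ cA.comul) (hε : εW ∘ₗ f = cA.counit) :
    (εW.lTensor W ∘ₗ ΔW) ∘ₗ f = (TensorProduct.mk k W k).flip 1 ∘ₗ f := by
  have e : εW.lTensor W ∘ₗ TensorProduct.map f f
      = f.rTensor k ∘ₗ cA.counit.lTensor A := by
    rw [LinearMap.lTensor_comp_map, hε, ← LinearMap.rTensor_comp_lTensor]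
  rw [LinearMap.comp_assoc, hΔ, ← LinearMap.comp_assoc, e, LinearMap.comp_assoc,
    Coalgebra.lTensor_counit_comp_comul]
  ext a
  simp

end aux

lemma ext_prod_directSum {k H : Type*} {Γ : Type*} [DecidableEq Γ] {V : Γ → Type*}
    {M : Type*}
    [CommSemiring k] [AddCommMonoid H] [Module k H]
    [∀ i, AddCommMonoid (V i)] [∀ i, Module k (V i)]
    [AddCommMonoid M] [Module k M]
    (F G : (H × ⨁ i, V i) →ₗ[k] M)
    (h1 : F ∘ₗ LinearMap.inl k H (⨁ i, V i) = G ∘ₗ LinearMap.inl k H (⨁ i, V i))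
    (h2 : ∀ i, F ∘ₗ ((LinearMap.id : H →ₗ[k] H).prodMap (DirectSum.lof k Γ V i))
      = G ∘ₗ ((LinearMap.id : H →ₗ[k] H).prodMap (DirectSum.lof k Γ V i))) : F = G := by
  apply LinearMap.prod_ext h1
  apply DirectSum.linearMap_ext
  intro i
  have h3 := congrArg (fun g => g ∘ₗ LinearMap.inr k H (V i)) (h2 i)
  have h4 : ((LinearMap.id : H →ₗ[k] H).prodMap (DirectSum.lof k Γ V i))
      ∘ₗ LinearMap.inr k H (V i)
      = LinearMap.inr k H (⨁ i, V i) ∘ₗ DirectSum.lof k Γ V i := by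
    ext v <;> simp
  simp only [LinearMap.comp_assoc, h4] at h3
  simpa [LinearMap.comp_assoc] using h3

/-- **Statement 14.** Let `H` be a coalgebra over a field `k`, and for each `i` in an index set
`Γ` let `H ⊕ Vᵢ` carry a coalgebra structure such that the inclusion `H → H ⊕ Vᵢ` is a
coalgebra morphism.  Then `W = H ⊕ (⊕ᵢ Vᵢ)` carries a coalgebra structure such that each
inclusion `H ⊕ Vᵢ → W` is a coalgebra morphism; in particular the inclusion `H → W` is a
coalgebra morphism. -/
theorem exists_coalgebra_on_directSum_extension
    (k H : Type*) [Field k] [AddCommGroup H] [Module k H] (cH : Coalgebra k H)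
    (Γ : Type*) [DecidableEq Γ] (V : Γ → Type*)
    [∀ i, AddCommGroup (V i)] [∀ i, Module k (V i)]
    (cHV : ∀ i, Coalgebra k (H × V i))
    (hincl : ∀ i, IsCoalgMor cH.toCoalgebraStruct (cHV i).toCoalgebraStruct
      (LinearMap.inl k H (V i))) :
    ∃ cW : Coalgebra k (H × (⨁ i, V i)),
      (∀ i, IsCoalgMor (cHV i).toCoalgebraStruct cW.toCoalgebraStruct
        ((LinearMap.id : H →ₗ[k] H).prodMap (DirectSum.lof k Γ V i))) ∧
      IsCoalgMor cH.toCoalgebraStruct cW.toCoalgebraStruct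
        (LinearMap.inl k H (⨁ i, V i)) := by
  classical
  let ι : ∀ i, (H × V i) →ₗ[k] (H × ⨁ i, V i) := fun i =>
    (LinearMap.id : H →ₗ[k] H).prodMap (DirectSum.lof k Γ V i)
  have hιinl : ∀ i, (ι i) ∘ₗ LinearMap.inl k H (V i) = LinearMap.inl k H (⨁ i, V i) := by
    intro i; ext h <;> simp [ι, LinearMap.prodMap_apply]
  have hιinr : ∀ i, (ι i) ∘ₗ LinearMap.inr k H (V i)
      = LinearMap.inr k H (⨁ i, V i) ∘ₗ DirectSum.lof k Γ V i := by
    intro i; ext v <;> simp [ι, LinearMap.prodMap_apply]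
  let ΔW : (H × ⨁ i, V i) →ₗ[k] (H × ⨁ i, V i) ⊗[k] (H × ⨁ i, V i) :=
    LinearMap.coprod
      (TensorProduct.map (LinearMap.inl k H (⨁ i, V i)) (LinearMap.inl k H (⨁ i, V i))
        ∘ₗ cH.comul)
      (DirectSum.toModule k Γ ((H × ⨁ i, V i) ⊗[k] (H × ⨁ i, V i)) fun i =>
        TensorProduct.map (ι i) (ι i) ∘ₗ (cHV i).comul ∘ₗ LinearMap.inr k H (V i))
  let εW : (H × ⨁ i, V i) →ₗ[k] k :=
    LinearMap.coprod cH.counit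
      (DirectSum.toModule k Γ k fun i => (cHV i).counit ∘ₗ LinearMap.inr k H (V i))
  have hΔinl : ΔW ∘ₗ LinearMap.inl k H (⨁ i, V i)
      = TensorProduct.map (LinearMap.inl k H (⨁ i, V i)) (LinearMap.inl k H (⨁ i, V i))
        ∘ₗ cH.comul := by
    ext h; simp [ΔW]
  have hεinl : εW ∘ₗ LinearMap.inl k H (⨁ i, V i) = cH.counit := by
    ext h; simp [εW]
  have hΔιinr : ∀ i, ΔW ∘ₗ (LinearMap.inr k H (⨁ i, V i) ∘ₗ DirectSum.lof k Γ V i)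
      = TensorProduct.map (ι i) (ι i) ∘ₗ (cHV i).comul ∘ₗ LinearMap.inr k H (V i) := by
    intro i; ext v; simp [ΔW]
  have hειinr : ∀ i, εW ∘ₗ (LinearMap.inr k H (⨁ i, V i) ∘ₗ DirectSum.lof k Γ V i)
      = (cHV i).counit ∘ₗ LinearMap.inr k H (V i) := by
    intro i; ext v; simp [εW]
  have hΔι : ∀ i, ΔW ∘ₗ ι i = TensorProduct.map (ι i) (ι i) ∘ₗ (cHV i).comul := by
    intro i
    apply LinearMap.prod_ext
    · rw [LinearMap.comp_assoc, hιinl i, hΔinl, LinearMap.comp_assoc, (hincl i).1,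
        ← LinearMap.comp_assoc, ← TensorProduct.map_comp, hιinl i]
    · rw [LinearMap.comp_assoc, hιinr i, hΔιinr i, LinearMap.comp_assoc]
  have hει : ∀ i, εW ∘ₗ ι i = (cHV i).counit := by
    intro i
    apply LinearMap.prod_ext
    · rw [LinearMap.comp_assoc, hιinl i, hεinl, (hincl i).2]
    · rw [LinearMap.comp_assoc, hιinr i, hειinr i]
  have hcoassoc :
      (TensorProduct.assoc k (H × ⨁ i, V i) (H × ⨁ i, V i) (H × ⨁ i, V i) : ((H × ⨁ i, V i) ⊗[k] (H × ⨁ i, V i)) ⊗[k] (H × ⨁ i, V i) →ₗ[k] (H × ⨁ i, V i) ⊗[k] ((H × ⨁ i, V i) ⊗[k] (H × ⨁ i, V i)))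
        ∘ₗ ΔW.rTensor (H × ⨁ i, V i) ∘ₗ ΔW = ΔW.lTensor (H × ⨁ i, V i) ∘ₗ ΔW := by
    apply ext_prod_directSum
    · simpa [LinearMap.comp_assoc] using aux_coassoc cH ΔW _ hΔinl
    · intro i
      simpa [LinearMap.comp_assoc] using aux_coassoc (cHV i) ΔW (ι i) (hΔι i)
  have hrc : εW.rTensor (H × ⨁ i, V i) ∘ₗ ΔW = TensorProduct.mk k k (H × ⨁ i, V i) 1 := by
    apply ext_prod_directSum
    · simpa [LinearMap.comp_assoc] using aux_rcounit cH ΔW εW _ hΔinl hεinl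
    · intro i
      simpa [LinearMap.comp_assoc] using aux_rcounit (cHV i) ΔW εW (ι i) (hΔι i) (hει i)
  have hlc : εW.lTensor (H × ⨁ i, V i) ∘ₗ ΔW = (TensorProduct.mk k (H × ⨁ i, V i) k).flip 1 := by
    apply ext_prod_directSum
    · simpa [LinearMap.comp_assoc] using aux_lcounit cH ΔW εW _ hΔinl hεinl
    · intro i
      simpa [LinearMap.comp_assoc] using aux_lcounit (cHV i) ΔW εW (ι i) (hΔι i) (hει i)
  refine ⟨{ comul := ΔW, counit := εW, coassoc := hcoassoc,
            rTensor_counit_comp_comul := hrc, lTensor_counit_comp_comul := hlc },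
          fun i => ⟨hΔι i, hει i⟩, ⟨hΔinl, hεinl⟩⟩
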